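/- arXiv:2110.08877 — 7 statements merged into one kernel-verified Lean document; each statement's English description precedes it below -/
import Mathlib

section
/- The Nil rotation through angle ω about the z-axis at the origin, r_ω(x,y,z) = (x̄, ȳ, z̄) with x̄ = x·cos ω − y·sin ω, ȳ = x·sin ω + y·cos ω, z̄ = z − (1/2)xy + (1/4)(x² − y²)·sin 2ω + (1/2)xy·cos 2ω, preserves the Nil arc-length square: for every point (x,y,z) ∈ ℝ³ and every tangent vector (u,v,s) ∈ ℝ³, setting ū = u·cos ω − v·sin ω, v̄ = u·sin ω + v·cos ω, and s̄ = s + u·(−y/2 + (x/2)·sin 2ω + (y/2)·cos 2ω) + v·(−x/2 − (y/2)·sin 2ω + (x/2)·cos 2ω) (the image of (u,v,s) under the differential of r_ω at (x,y,z)), one has ū² + (1+x̄²)·v̄² − 2x̄·v̄·s̄ + s̄² = u² + (1+x²)·v² − 2x·v·s + s². -/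
open Real

/-- **The Nil rotation about the z-axis preserves the Nil arc-length square.**
For every point `(x,y,z)` and tangent vector `(u,v,s)`, with
`x̄ = x·cos ω − y·sin ω`, `ū = u·cos ω − v·sin ω`, `v̄ = u·sin ω + v·cos ω`, and
`s̄ = s + u·(−y/2 + (x/2)·sin 2ω + (y/2)·cos 2ω) + v·(−x/2 − (y/2)·sin 2ω + (x/2)·cos 2ω)`
(the image of `(u,v,s)` under the differential of the Nil rotation `r_ω` at `(x,y,z)`),
one has `Q_{(x̄,ȳ,z̄)}(ū,v̄,s̄) = Q_{(x,y,z)}(u,v,s)`. -/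
theorem nil_rotation_preserves_metric (ω x y z u v s : ℝ)
    (xb ub vb sb : ℝ)
    (hxb : xb = x * cos ω - y * sin ω)
    (hub : ub = u * cos ω - v * sin ω)
    (hvb : vb = u * sin ω + v * cos ω)
    (hsb : sb = s + u * (-y / 2 + x / 2 * sin (2 * ω) + y / 2 * cos (2 * ω)) +
        v * (-x / 2 - y / 2 * sin (2 * ω) + x / 2 * cos (2 * ω))) :
    ub ^ 2 + (1 + xb ^ 2) * vb ^ 2 - 2 * xb * vb * sb + sb ^ 2 =
      u ^ 2 + (1 + x ^ 2) * v ^ 2 - 2 * x * v * s + s ^ 2 := by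
  subst hxb hub hvb hsb
  have h1 : sin ω ^ 2 + cos ω ^ 2 = 1 := Real.sin_sq_add_cos_sq ω
  have h3 : sin (2 * ω) = 2 * sin ω * cos ω := Real.sin_two_mul ω
  have h2 : cos (2 * ω) = cos ω ^ 2 - sin ω ^ 2 := by rw [Real.cos_two_mul']
  rw [h2, h3]
  linear_combination (v ^ 2 + u ^ 2 + y * u * s - (1/4 : ℝ) * y ^ 2 * u ^ 2 + (1/4 : ℝ) * y ^ 2 * u ^ 2 * sin ω ^ 2 + (1/4 : ℝ) * y ^ 2 * u ^ 2 * cos ω ^ 2 - x * v * s - (1/2 : ℝ) * x * y * u * v - (1/2 : ℝ) * x * y * u * v * sin ω ^ 2 - (1/2 : ℝ) * x * y * u * v * cos ω ^ 2 + (3/4 : ℝ) * x ^ 2 * v ^ 2 + (1/4 : ℝ) * x ^ 2 * v ^ 2 * sin ω ^ 2 + (1/4 : ℝ) * x ^ 2 * v ^ 2 * cos ω ^ 2) * h1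
end

section
/- The quadratic mapping M(x,y,z) = (x, y, z − (1/2)xy) conjugates the Nil rotation r_ω to the Euclidean rotation about the z-axis: for every ω ∈ ℝ and every (x,y,z) ∈ ℝ³, M(r_ω(x,y,z)) = R_ω(M(x,y,z)), where r_ω(x,y,z) = (x·cos ω − y·sin ω, x·sin ω + y·cos ω, z − (1/2)xy + (1/4)(x² − y²)·sin 2ω + (1/2)xy·cos 2ω) and R_ω(x,y,z) = (x·cos ω − y·sin ω, x·sin ω + y·cos ω, z). -/
open Real

/-- The quadratic mapping `M(x,y,z) = (x, y, z − (1/2)xy)`. -/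
noncomputable def quadMap (p : ℝ × ℝ × ℝ) : ℝ × ℝ × ℝ :=
  (p.1, p.2.1, p.2.2 - p.1 * p.2.1 / 2)

/-- The Nil rotation through angle `ω` about the z-axis at the origin. -/
noncomputable def nilRotation (ω : ℝ) (p : ℝ × ℝ × ℝ) : ℝ × ℝ × ℝ :=
  (p.1 * cos ω - p.2.1 * sin ω,
   p.1 * sin ω + p.2.1 * cos ω,
   p.2.2 - p.1 * p.2.1 / 2 + (p.1 ^ 2 - p.2.1 ^ 2) / 4 * sin (2 * ω) +
     p.1 * p.2.1 / 2 * cos (2 * ω))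

/-- The Euclidean rotation of ℝ³ through angle `ω` about the z-axis. -/
noncomputable def eucRotation (ω : ℝ) (p : ℝ × ℝ × ℝ) : ℝ × ℝ × ℝ :=
  (p.1 * cos ω - p.2.1 * sin ω, p.1 * sin ω + p.2.1 * cos ω, p.2.2)

/-- **The quadratic mapping `M` conjugates the Nil rotation to the Euclidean rotation:**
for every `ω` and every point `(x,y,z)`, `M(r_ω(x,y,z)) = R_ω(M(x,y,z))`. -/
theorem quadMap_conjugates_nilRotation (ω x y z : ℝ) :
    quadMap (nilRotation ω (x, y, z)) = eucRotation ω (quadMap (x, y, z)) := by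
  simp only [quadMap, nilRotation, eucRotation, Prod.mk.injEq, sin_two_mul, cos_two_mul]
  refine ⟨trivial, trivial, ?_⟩
  have this := sin_sq_add_cos_sq ω
  linear_combination x * y / 2 * this
end

section
/- The helix-like Nil geodesic has unit speed: let θ ∈ (−π/2, π/2) with w = sin θ ≠ 0, c = cos θ, and α ∈ ℝ, and define x(t) = (2c/w)·sin(wt/2)·cos(wt/2 + α), y(t) = (2c/w)·sin(wt/2)·sin(wt/2 + α), z(t) = wt + c²t/(2w) − (c²/(4w²))·(sin(2wt + 2α) − sin 2α) − (c²·sin α/w²)·(cos α − cos(wt + α)). Then for every t ∈ ℝ, x'(t)² + (1 + x(t)²)·y'(t)² − 2·x(t)·y'(t)·z'(t) + z'(t)² = 1. -/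
open Real

/-- **The helix-like Nil geodesic has unit speed:** for `θ ∈ (−π/2, π/2)` with
`w = sin θ ≠ 0`, `c = cos θ`, `α ∈ ℝ` and the helix-like geodesic
`x(t) = (2c/w)·sin(wt/2)·cos(wt/2 + α)`, `y(t) = (2c/w)·sin(wt/2)·sin(wt/2 + α)`,
`z(t) = wt + c²t/(2w) − (c²/(4w²))·(sin(2wt + 2α) − sin 2α) − (c²·sin α/w²)·(cos α − cos(wt + α))`,
one has `x'(t)² + (1 + x(t)²)·y'(t)² − 2·x(t)·y'(t)·z'(t) + z'(t)² = 1` for every `t`. -/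
theorem nil_helix_geodesic_unit_speed (θ α c w : ℝ)
    (hθ : θ ∈ Set.Ioo (-(π / 2)) (π / 2))
    (hw : w = sin θ) (hw0 : w ≠ 0) (hc : c = cos θ)
    (x y z : ℝ → ℝ)
    (hx : ∀ t, x t = 2 * c / w * sin (w * t / 2) * cos (w * t / 2 + α))
    (hy : ∀ t, y t = 2 * c / w * sin (w * t / 2) * sin (w * t / 2 + α))
    (hz : ∀ t, z t = w * t + c ^ 2 * t / (2 * w)
        - c ^ 2 / (4 * w ^ 2) * (sin (2 * w * t + 2 * α) - sin (2 * α))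
        - c ^ 2 * sin α / w ^ 2 * (cos α - cos (w * t + α))) :
    ∀ t : ℝ,
      deriv x t ^ 2 + (1 + x t ^ 2) * deriv y t ^ 2 -
          2 * x t * deriv y t * deriv z t + deriv z t ^ 2 = 1 := by
  have hxe := funext hx
  have hye := funext hy
  have hze := funext hz
  subst hxe hye hze
  intro t
  have hcw : c ^ 2 + w ^ 2 = 1 := by
    rw [hc, hw]; exact cos_sq_add_sin_sq θ
  -- inner derivatives
  have h1 : HasDerivAt (fun s : ℝ => w * s / 2) (w / 2) t := by
    simpa using ((hasDerivAt_id t).const_mul w).div_const 2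
  have h2 : HasDerivAt (fun s : ℝ => w * s / 2 + α) (w / 2) t := h1.add_const α
  have h3 : HasDerivAt (fun s : ℝ => w * s + α) w t := by
    simpa using ((hasDerivAt_id t).const_mul w).add_const α
  have h4 : HasDerivAt (fun s : ℝ => 2 * w * s + 2 * α) (2 * w) t := by
    simpa using ((hasDerivAt_id t).const_mul (2 * w)).add_const (2 * α)
  -- abbreviations
  set a := sin (w * t / 2) with ha
  set b := cos (w * t / 2) with hb
  set p := sin (w * t / 2 + α) with hp
  set q := cos (w * t / 2 + α) with hq
  have hab : a ^ 2 + b ^ 2 = 1 := sin_sq_add_cos_sq _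
  have hpq : p ^ 2 + q ^ 2 = 1 := sin_sq_add_cos_sq _
  -- derivative of x
  have hxd : HasDerivAt (fun s : ℝ => 2 * c / w * sin (w * s / 2) * cos (w * s / 2 + α))
      (2 * c / w * (b * (w / 2)) * q + 2 * c / w * a * (-p * (w / 2))) t :=
    (h1.sin.const_mul (2 * c / w)).mul h2.cos
  have edx : deriv (fun s : ℝ => 2 * c / w * sin (w * s / 2) * cos (w * s / 2 + α)) t
      = c * (b * q - a * p) := by
    rw [hxd.deriv]; field_simp; ring
  -- derivative of y
  have hyd : HasDerivAt (fun s : ℝ => 2 * c / w * sin (w * s / 2) * sin (w * s / 2 + α))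
      (2 * c / w * (b * (w / 2)) * p + 2 * c / w * a * (q * (w / 2))) t :=
    (h1.sin.const_mul (2 * c / w)).mul h2.sin
  have edy : deriv (fun s : ℝ => 2 * c / w * sin (w * s / 2) * sin (w * s / 2 + α)) t
      = c * (b * p + a * q) := by
    rw [hyd.deriv]; field_simp
  -- derivative of z
  have hzd : HasDerivAt (fun s : ℝ => w * s + c ^ 2 * s / (2 * w)
        - c ^ 2 / (4 * w ^ 2) * (sin (2 * w * s + 2 * α) - sin (2 * α))
        - c ^ 2 * sin α / w ^ 2 * (cos α - cos (w * s + α)))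
      (((w * 1) + (c ^ 2 * 1) / (2 * w))
        - c ^ 2 / (4 * w ^ 2) * (cos (2 * w * t + 2 * α) * (2 * w))
        - c ^ 2 * sin α / w ^ 2 * (0 - (-sin (w * t + α) * w))) t := by
    exact ((((hasDerivAt_id t).const_mul w).add
        (((hasDerivAt_id t).const_mul (c ^ 2)).div_const (2 * w))).sub
        ((h4.sin.sub_const (sin (2 * α))).const_mul (c ^ 2 / (4 * w ^ 2)))).sub
        (((hasDerivAt_const t (cos α)).sub h3.cos).const_mul (c ^ 2 * sin α / w ^ 2))
  -- trig expansions
  have hC : cos (2 * w * t + 2 * α) = 2 * (b * q - a * p) ^ 2 - 1 := by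
    rw [show 2 * w * t + 2 * α = 2 * (w * t / 2 + (w * t / 2 + α)) by ring, cos_two_mul,
      cos_add]
  have hS : sin (w * t + α) = a * q + b * p := by
    rw [show w * t + α = w * t / 2 + (w * t / 2 + α) by ring, sin_add]
  have hsa : sin α = p * b - q * a := by
    have := sin_sub (w * t / 2 + α) (w * t / 2)
    rw [show w * t / 2 + α - w * t / 2 = α by ring] at this
    rw [this]
  have edz : deriv (fun s : ℝ => w * s + c ^ 2 * s / (2 * w)
        - c ^ 2 / (4 * w ^ 2) * (sin (2 * w * s + 2 * α) - sin (2 * α))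
        - c ^ 2 * sin α / w ^ 2 * (cos α - cos (w * s + α))) t
      = w + 2 * c / w * a * q * (c * (b * p + a * q)) := by
    rw [hzd.deriv, hC, hS, hsa]
    field_simp
    linear_combination (-(8 * w * c ^ 2 * (p ^ 2 + q ^ 2))) * hab
      + (-(8 * w * c ^ 2)) * hpq
  rw [edx, edy, edz, hx t]
  linear_combination (c ^ 2 * (p ^ 2 + q ^ 2)) * hab + c ^ 2 * hpq + hcw
end

section
/- The fibre projection of a helix-like Nil geodesic is injective over one period of the circle: for real numbers c > 0, w ≠ 0, α ∈ ℝ, the map t ↦ ( (2c/w)·sin(wt/2)·cos(wt/2 + α), (2c/w)·sin(wt/2)·sin(wt/2 + α) ) is injective on the interval [0, 2π/|w|). Consequently, on such a segment there is a one-to-one correspondence between the geodesic segment and its fibre-projected circular arc. -/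
open Real

/-- **Injectivity of the fibre projection of a helix-like Nil geodesic over one period:**
for `c > 0`, `w ≠ 0`, `α ∈ ℝ`, the map
`t ↦ ((2c/w)·sin(wt/2)·cos(wt/2 + α), (2c/w)·sin(wt/2)·sin(wt/2 + α))`
is injective on the interval `[0, 2π/|w|)`; hence on such a segment there is a one-to-one
correspondence between the geodesic segment and its fibre-projected circular arc. -/
theorem nil_helix_projection_injective (c w α : ℝ) (hc : 0 < c) (hw : w ≠ 0) :
    Set.InjOn
      (fun t : ℝ =>
        ((2 * c / w * sin (w * t / 2) * cos (w * t / 2 + α),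
          2 * c / w * sin (w * t / 2) * sin (w * t / 2 + α)) : ℝ × ℝ))
      (Set.Ico 0 (2 * π / |w|)) := by
  intro s hs t ht h
  have hk : 2 * c / w ≠ 0 := div_ne_zero (by linarith) hw
  rw [Prod.ext_iff] at h
  obtain ⟨h1, h2⟩ := h
  simp only at h1 h2
  have e1 : sin (w * s / 2) * cos (w * s / 2 + α) = sin (w * t / 2) * cos (w * t / 2 + α) :=
    mul_left_cancel₀ hk (by rw [← mul_assoc, ← mul_assoc]; exact h1)
  have e2 : sin (w * s / 2) * sin (w * s / 2 + α) = sin (w * t / 2) * sin (w * t / 2 + α) :=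
    mul_left_cancel₀ hk (by rw [← mul_assoc, ← mul_assoc]; exact h2)
  -- product-to-sum identities
  have lsin : ∀ u : ℝ, 2 * (sin (w * u / 2) * cos (w * u / 2 + α)) = sin (w * u + α) - sin α := by
    intro u
    have h₁ : sin (w * u + α) = sin (w * u / 2) * cos (w * u / 2 + α)
        + cos (w * u / 2) * sin (w * u / 2 + α) := by
      rw [show w * u + α = w * u / 2 + (w * u / 2 + α) by ring, Real.sin_add]
    have h₂ : sin α = sin (w * u / 2 + α) * cos (w * u / 2)
        - cos (w * u / 2 + α) * sin (w * u / 2) := by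
      rw [← Real.sin_sub]; ring_nf
    linarith
  have lcos : ∀ u : ℝ, 2 * (sin (w * u / 2) * sin (w * u / 2 + α)) = cos α - cos (w * u + α) := by
    intro u
    have h₁ : cos (w * u + α) = cos (w * u / 2) * cos (w * u / 2 + α)
        - sin (w * u / 2) * sin (w * u / 2 + α) := by
      rw [show w * u + α = w * u / 2 + (w * u / 2 + α) by ring, Real.cos_add]
    have h₂ : cos α = cos (w * u / 2 + α) * cos (w * u / 2)
        + sin (w * u / 2 + α) * sin (w * u / 2) := by
      rw [← Real.cos_sub]; ring_nf
    linarith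
  have s1 : sin (w * s + α) = sin (w * t + α) := by
    have := lsin s; have := lsin t; linarith
  have c1 : cos (w * s + α) = cos (w * t + α) := by
    have := lcos s; have := lcos t; linarith
  have hcos1 : cos ((w * s + α) - (w * t + α)) = 1 := by
    rw [Real.cos_sub, s1, c1]
    nlinarith [sin_sq_add_cos_sq (w * t + α)]
  obtain ⟨n, hn⟩ := (Real.cos_eq_one_iff _).mp hcos1
  have hwpos : 0 < |w| := abs_pos.mpr hw
  have hL : |s - t| < 2 * π / |w| := by
    rw [abs_sub_lt_iff]
    constructor <;> linarith [hs.1, hs.2, ht.1, ht.2]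
  have hbound : |w * (s - t)| < 2 * π := by
    rw [abs_mul]
    calc |w| * |s - t| < |w| * (2 * π / |w|) := by
          exact mul_lt_mul_of_pos_left hL hwpos
      _ = 2 * π := by field_simp
  have hn' : w * (s - t) = n * (2 * π) := by rw [hn]; ring
  have hn0 : n = 0 := by
    by_contra hne
    have h1le : (1 : ℝ) ≤ |(n : ℝ)| := by
      exact_mod_cast Int.one_le_abs (by exact_mod_cast hne)
    have : 2 * π ≤ |w * (s - t)| := by
      rw [hn', abs_mul, abs_of_pos (by positivity : (0:ℝ) < 2 * π)]
      nlinarith [Real.pi_pos]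
    linarith
  have : w * (s - t) = 0 := by rw [hn', hn0]; simp
  have : s - t = 0 := by
    rcases mul_eq_zero.mp this with h | h
    · exact absurd h hw
    · exact h
  linarith
end

section
/- The fibre projection scales Nil arc length by cos θ: let θ ∈ (−π/2, π/2) with w = sin θ ≠ 0, c = cos θ, α ∈ ℝ, and x(t) = (2c/w)·sin(wt/2)·cos(wt/2 + α), y(t) = (2c/w)·sin(wt/2)·sin(wt/2 + α). Then x'(t)² + y'(t)² = cos²θ for all t, and hence for every T ≥ 0 the Euclidean arc length of the projected curve, ∫₀ᵀ √(x'(t)² + y'(t)²) dt, equals T·cos θ, i.e. cos θ times the Nil arc length of the geodesic segment from parameter 0 to T. In particular the fibre projection preserves ratios of arc lengths along a single geodesic. -/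
open Real

/-- **The fibre projection scales Nil arc length by `cos θ`:** for `θ ∈ (−π/2, π/2)` with
`w = sin θ ≠ 0`, `c = cos θ`, `α ∈ ℝ` and
`x(t) = (2c/w)·sin(wt/2)·cos(wt/2 + α)`, `y(t) = (2c/w)·sin(wt/2)·sin(wt/2 + α)`,
one has `x'(t)² + y'(t)² = cos²θ` for all `t`, and for every `T ≥ 0` the Euclidean arc
length `∫₀ᵀ √(x'(t)² + y'(t)²) dt` of the projected curve equals `T·cos θ`,
i.e. `cos θ` times the Nil arc length of the geodesic segment. -/
theorem nil_fibre_projection_scales_arclength (θ α c w : ℝ)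
    (hθ : θ ∈ Set.Ioo (-(π / 2)) (π / 2))
    (hw : w = sin θ) (hw0 : w ≠ 0) (hc : c = cos θ)
    (x y : ℝ → ℝ)
    (hx : ∀ t, x t = 2 * c / w * sin (w * t / 2) * cos (w * t / 2 + α))
    (hy : ∀ t, y t = 2 * c / w * sin (w * t / 2) * sin (w * t / 2 + α)) :
    (∀ t : ℝ, deriv x t ^ 2 + deriv y t ^ 2 = cos θ ^ 2) ∧
      ∀ T : ℝ, 0 ≤ T →
        (∫ t in (0 : ℝ)..T, Real.sqrt (deriv x t ^ 2 + deriv y t ^ 2)) = T * cos θ := by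
  have hxf : x = fun t => 2 * c / w * sin (w * t / 2) * cos (w * t / 2 + α) := funext hx
  have hyf : y = fun t => 2 * c / w * sin (w * t / 2) * sin (w * t / 2 + α) := funext hy
  have hu : ∀ t : ℝ, HasDerivAt (fun t : ℝ => w * t / 2) (w / 2) t := by
    intro t
    simpa using (((hasDerivAt_id t).const_mul w).div_const 2)
  have hx' : ∀ t : ℝ, HasDerivAt x (c * cos (w * t + α)) t := by
    intro t
    rw [hxf]
    have h1 : HasDerivAt (fun t : ℝ => sin (w * t / 2)) (cos (w * t / 2) * (w / 2)) t :=
      (Real.hasDerivAt_sin _).comp t (hu t)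
    have h2 : HasDerivAt (fun t : ℝ => cos (w * t / 2 + α))
        (-sin (w * t / 2 + α) * (w / 2)) t :=
      (Real.hasDerivAt_cos _).comp t ((hu t).add_const α)
    have := ((h1.mul h2).const_mul (2 * c / w))
    have this : HasDerivAt (fun s : ℝ => 2 * c / w * (sin (w * s / 2) * cos (w * s / 2 + α))) _ t := this
    convert this using 1
    · funext s; ring
    have hcc : cos (w * t + α) = cos (w * t / 2) * cos (w * t / 2 + α)
        - sin (w * t / 2) * sin (w * t / 2 + α) := by
      rw [← Real.cos_add]; ring_nf
    rw [hcc]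
    field_simp
    ring
  have hy' : ∀ t : ℝ, HasDerivAt y (c * sin (w * t + α)) t := by
    intro t
    rw [hyf]
    have h1 : HasDerivAt (fun t : ℝ => sin (w * t / 2)) (cos (w * t / 2) * (w / 2)) t :=
      (Real.hasDerivAt_sin _).comp t (hu t)
    have h2 : HasDerivAt (fun t : ℝ => sin (w * t / 2 + α))
        (cos (w * t / 2 + α) * (w / 2)) t :=
      (Real.hasDerivAt_sin _).comp t ((hu t).add_const α)
    have := ((h1.mul h2).const_mul (2 * c / w))
    have this : HasDerivAt (fun s : ℝ => 2 * c / w * (sin (w * s / 2) * sin (w * s / 2 + α))) _ t := this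
    convert this using 1
    · funext s; ring
    have hss : sin (w * t + α) = sin (w * t / 2) * cos (w * t / 2 + α)
        + cos (w * t / 2) * sin (w * t / 2 + α) := by
      rw [← Real.sin_add]; ring_nf
    rw [hss]
    field_simp
    ring
  have key : ∀ t : ℝ, deriv x t ^ 2 + deriv y t ^ 2 = cos θ ^ 2 := by
    intro t
    rw [(hx' t).deriv, (hy' t).deriv, hc]
    have := Real.sin_sq_add_cos_sq (w * t + α)
    nlinarith [this]
  refine ⟨key, fun T hT => ?_⟩
  have hcpos : 0 < cos θ := Real.cos_pos_of_mem_Ioo hθ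
  have : (∫ t in (0 : ℝ)..T, Real.sqrt (deriv x t ^ 2 + deriv y t ^ 2))
      = ∫ _ in (0 : ℝ)..T, cos θ := by
    apply intervalIntegral.integral_congr
    intro t _
    show Real.sqrt (deriv x t ^ 2 + deriv y t ^ 2) = cos θ
    rw [key t, Real.sqrt_sq hcpos.le]
  rw [this, intervalIntegral.integral_const]
  simp
end

section
/- For radius R > 2π the Nil geodesic sphere self-intersects: let R > 2π, set w = 2π/R ∈ (0,1) and c = √(1 − w²), and for α ∈ ℝ define the geodesic endpoint E(α) = (x(R), y(R), z(R)) with x(t) = (2c/w)·sin(wt/2)·cos(wt/2 + α), y(t) = (2c/w)·sin(wt/2)·sin(wt/2 + α), z(t) = wt + c²t/(2w) − (c²/(4w²))·(sin(2wt + 2α) − sin 2α) − (c²·sin α/w²)·(cos α − cos(wt + α)). Then for every α one has x(R) = 0, y(R) = 0 and z(R) = 2π + c²·R/(2w); in particular E(α₁) = E(α₂) for all α₁, α₂, so the map sending the direction parameters (θ, α) (with sin θ = w) to the endpoint of the unit-speed geodesic of length R is not injective. -/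
open Real

/-- **For radius `R > 2π` the Nil geodesic sphere self-intersects:** with `w = 2π/R`,
`c = √(1 − w²)`, and `E(α)` the endpoint at parameter `R` of the helix-like geodesic with
direction parameter `α`, every `E(α)` equals `(0, 0, 2π + c²·R/(2w))`; in particular
`E(α₁) = E(α₂)` for all `α₁, α₂`, so the endpoint map is not injective. -/
theorem nil_sphere_self_intersects_of_radius_gt_two_pi (R w c : ℝ)
    (hR : 2 * π < R) (hw : w = 2 * π / R) (hc : c = Real.sqrt (1 - w ^ 2))
    (E : ℝ → ℝ × ℝ × ℝ)
    (hE : ∀ α : ℝ, E α =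
      (2 * c / w * sin (w * R / 2) * cos (w * R / 2 + α),
       2 * c / w * sin (w * R / 2) * sin (w * R / 2 + α),
       w * R + c ^ 2 * R / (2 * w)
         - c ^ 2 / (4 * w ^ 2) * (sin (2 * w * R + 2 * α) - sin (2 * α))
         - c ^ 2 * sin α / w ^ 2 * (cos α - cos (w * R + α)))) :
    (∀ α : ℝ, E α = (0, 0, 2 * π + c ^ 2 * R / (2 * w))) ∧
      ∀ α₁ α₂ : ℝ, E α₁ = E α₂ := by
  have hRpos : (0:ℝ) < R := lt_trans (by positivity) hR
  have hwR : w * R = 2 * π := by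
    rw [hw]; field_simp
  have key : ∀ α : ℝ, E α = (0, 0, 2 * π + c ^ 2 * R / (2 * w)) := by
    intro α
    rw [hE α, hwR]
    have h1 : sin (2 * π / 2) = 0 := by
      norm_num [Real.sin_pi]
    have h2 : sin (2 * (2 * π) + 2 * α) = sin (2 * α) := by
      have h := Real.sin_add_int_mul_two_pi (2 * α) 2
      push_cast at h
      rw [show 2 * (2 * π) + 2 * α = 2 * α + 2 * (2 * π) by ring, h]
    have h3 : cos (2 * π + α) = cos α := by
      rw [add_comm, Real.cos_add_two_pi]
    have h4 : 2 * w * R = 2 * (2 * π) := by rw [mul_assoc, hwR]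
    rw [h4, h1, h2, h3]
    norm_num
  exact ⟨key, fun α₁ α₂ => (key α₁).trans (key α₂).symm⟩
end

section
/- For 0 < R ≤ 2π the Nil geodesic endpoint map is injective: let 0 < R ≤ 2π and define E(θ, α) for θ ∈ (−π/2, π/2) and α ∈ [−π, π) as follows. If θ ≠ 0, with c = cos θ and w = sin θ, set E(θ, α) = (x(R), y(R), z(R)) where x(t) = (2c/w)·sin(wt/2)·cos(wt/2 + α), y(t) = (2c/w)·sin(wt/2)·sin(wt/2 + α), z(t) = wt + c²t/(2w) − (c²/(4w²))·(sin(2wt + 2α) − sin 2α) − (c²·sin α/w²)·(cos α − cos(wt + α)); if θ = 0, set E(0, α) = (R·cos α, R·sin α, (R²/2)·cos α·sin α). Then E is injective on (−π/2, π/2) × [−π, π): if E(θ₁, α₁) = E(θ₂, α₂) then θ₁ = θ₂ and α₁ = α₂. Hence the geodesic sphere of radius R exists (has no self-intersection) for every R ∈ (0, 2π]. -/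
open Real

lemma key0 (A a : ℝ) :
    A/2 - (sin (2*A+2*a) - sin (2*a))/4 - sin a * (cos a - cos (A+a))
      - (1 - cos A) * sin (A+2*a)/2 - (A - sin A)/2 = 0 := by
  have h1 : (2*A+2*a) = (A+a) + (A+a) := by ring
  have h2 : (A+2*a) = (A+a) + a := by ring
  have h3 : (2*a) = a + a := by ring
  rw [h1, h2, h3, sin_add (A+a) (A+a), sin_add (A+a) a, sin_add a a,
    sin_add A a, cos_add A a]
  linear_combination (sin a * cos a/2) * sin_sq_add_cos_sq A - (sin A/2) * sin_sq_add_cos_sq a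

lemma ztil (R w c α : ℝ) (hw : w ≠ 0) :
    (w*R + c^2*R/(2*w) - c^2/(4*w^2)*(sin (2*w*R+2*α) - sin (2*α))
      - c^2*sin α/w^2*(cos α - cos (w*R+α)))
    - (2*c/w*sin (w*R/2)*cos (w*R/2+α)) * (2*c/w*sin (w*R/2)*sin (w*R/2+α)) / 2
    = w*R + c^2*(w*R - sin (w*R))/(2*w^2) := by
  have e1 : sin (w*R/2)^2 = (1 - cos (w*R))/2 := by
    have h := cos_two_mul' (w*R/2)
    rw [show 2*(w*R/2) = w*R by ring] at h
    linear_combination h/2 - (sin_sq_add_cos_sq (w*R/2))/2 + sin_sq_add_cos_sq (w*R/2)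
  have e2 : 2*sin (w*R/2+α)*cos (w*R/2+α) = sin (w*R+2*α) := by
    rw [show w*R+2*α = 2*(w*R/2+α) by ring, sin_two_mul]
  have hxy : (2*c/w*sin (w*R/2)*cos (w*R/2+α)) * (2*c/w*sin (w*R/2)*sin (w*R/2+α))
      = c^2/w^2*(1-cos (w*R))*sin (w*R+2*α) := by
    linear_combination (4*c^2/w^2*cos (w*R/2+α)*sin (w*R/2+α))*e1
      + (c^2/w^2*(1-cos (w*R)))*e2
  have hdiv : c^2*R/(2*w) = c^2*(w*R)/(2*w^2) := by
    field_simp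
  have heq : 2*w*R+2*α = 2*(w*R)+2*α := by ring
  rw [hxy, hdiv, heq]
  linear_combination (c^2/w^2) * key0 (w*R) α

lemma sinc_strict (a b : ℝ) (ha : 0 < a) (hab : a < b) (hb : b ≤ π) :
    a * sin b < b * sin a := by
  have hb0 : 0 < b := ha.trans hab
  have hab1 : a / b < 1 := (div_lt_one hb0).2 hab
  have h := strictConcaveOn_sin_Icc.2 (Set.mem_Icc.2 ⟨le_rfl, pi_pos.le⟩)
    (Set.mem_Icc.2 ⟨hb0.le, hb⟩) hb0.ne (by linarith : (0:ℝ) < 1 - a / b)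
    (by positivity : (0:ℝ) < a / b) (by ring)
  simp only [smul_eq_mul, mul_zero, Real.sin_zero, zero_add] at h
  have h2 : a / b * b = a := by field_simp
  rw [h2] at h
  have h3 := mul_lt_mul_of_pos_left h hb0
  calc a * sin b = b * (a / b * sin b) := by field_simp
    _ < b * sin a := h3

lemma rho_strict (R w₁ w₂ : ℝ) (hR0 : 0 < R) (hR : R ≤ 2*π)
    (h1 : 0 < w₁) (h12 : w₁ < w₂) (h2 : w₂ < 1) :
    (1 - w₂^2) * sin (w₂*R/2)^2 / w₂^2 < (1 - w₁^2) * sin (w₁*R/2)^2 / w₁^2 := by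
  have hb : w₂*R/2 < π := by nlinarith
  have ha0 : 0 < w₁*R/2 := by positivity
  have hab : w₁*R/2 < w₂*R/2 := by nlinarith
  have hs1 : 0 < sin (w₁*R/2) := sin_pos_of_pos_of_lt_pi ha0 (hab.trans hb)
  have hs2 : 0 < sin (w₂*R/2) := sin_pos_of_pos_of_lt_pi (ha0.trans hab) hb
  have hkey := sinc_strict (w₁*R/2) (w₂*R/2) ha0 hab hb.le
  have hkey1 : w₁ * sin (w₂*R/2) < w₂ * sin (w₁*R/2) := by nlinarith
  have hkey2 : w₁^2 * sin (w₂*R/2)^2 < w₂^2 * sin (w₁*R/2)^2 := by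
    nlinarith [mul_lt_mul'' hkey1 hkey1 (mul_pos h1 hs2).le (mul_pos h1 hs2).le]
  have hw2 : 0 < 1 - w₂^2 := by nlinarith
  have hw1 : 0 < 1 - w₁^2 := by nlinarith
  rw [div_lt_div_iff₀ (pow_pos (h1.trans h12) 2) (pow_pos h1 2)]
  calc (1 - w₂^2) * sin (w₂*R/2)^2 * w₁^2
      = (1 - w₂^2) * (w₁^2 * sin (w₂*R/2)^2) := by ring
    _ < (1 - w₂^2) * (w₂^2 * sin (w₁*R/2)^2) := by
        exact mul_lt_mul_of_pos_left hkey2 hw2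
    _ ≤ (1 - w₁^2) * (w₂^2 * sin (w₁*R/2)^2) := by
        apply mul_le_mul_of_nonneg_right (by nlinarith) (by positivity)
    _ = (1 - w₁^2) * sin (w₁*R/2)^2 * w₂^2 := by ring

lemma angle_unique (a b : ℝ) (ha : a ∈ Set.Ico (-π) π) (hb : b ∈ Set.Ico (-π) π)
    (hc : cos a = cos b) (hs : sin a = sin b) : a = b := by
  have h : Complex.exp (a * Complex.I) = Complex.exp (b * Complex.I) := by
    rw [Complex.exp_mul_I, Complex.exp_mul_I, ← Complex.ofReal_cos, ← Complex.ofReal_cos,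
      ← Complex.ofReal_sin, ← Complex.ofReal_sin, hc, hs]
  obtain ⟨n, hn⟩ := Complex.exp_eq_exp_iff_exists_int.1 h
  have h2 : (a : ℂ) = b + n * (2*π) := by
    have h3 : ((a : ℂ) - (b + n*(2*π))) * Complex.I = 0 := by
      rw [sub_mul, add_mul]
      rw [hn]; ring
    rcases mul_eq_zero.1 h3 with h4 | h4
    · linear_combination h4
    · exact absurd h4 Complex.I_ne_zero
  have hreal : a = b + n * (2*π) := by exact_mod_cast h2
  obtain ⟨ha1, ha2⟩ := ha
  obtain ⟨hb1, hb2⟩ := hb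
  have hπ := pi_pos
  have hn1 : (n:ℝ) < 1 := by nlinarith
  have hn2 : (-1:ℝ) < (n:ℝ) := by nlinarith
  have : n = 0 := by
    have p1 : n < 1 := by exact_mod_cast hn1
    have p2 : -1 < n := by exact_mod_cast hn2
    omega
  rw [this] at hreal
  simpa using hreal


/-- **For `0 < R ≤ 2π` the Nil geodesic endpoint map is injective:** with
`E(θ, α)` the endpoint at parameter `R` of the unit-speed geodesic from the origin with
direction parameters `θ ∈ (−π/2, π/2)`, `α ∈ [−π, π)` (helix-like when `θ ≠ 0`, with
`c = cos θ`, `w = sin θ`; straight-type when `θ = 0`), if `E(θ₁, α₁) = E(θ₂, α₂)` then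
`θ₁ = θ₂` and `α₁ = α₂`. Hence the geodesic sphere of radius `R` has no self-intersection
for every `R ∈ (0, 2π]`. -/
theorem nil_sphere_endpoint_map_injective (R : ℝ) (hR0 : 0 < R) (hR : R ≤ 2 * π)
    (E : ℝ → ℝ → ℝ × ℝ × ℝ)
    (hE0 : ∀ α : ℝ, E 0 α = (R * cos α, R * sin α, R ^ 2 / 2 * cos α * sin α))
    (hE : ∀ θ α : ℝ, θ ≠ 0 → E θ α =
      (2 * cos θ / sin θ * sin (sin θ * R / 2) * cos (sin θ * R / 2 + α),
       2 * cos θ / sin θ * sin (sin θ * R / 2) * sin (sin θ * R / 2 + α),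
       sin θ * R + cos θ ^ 2 * R / (2 * sin θ)
         - cos θ ^ 2 / (4 * sin θ ^ 2) * (sin (2 * sin θ * R + 2 * α) - sin (2 * α))
         - cos θ ^ 2 * sin α / sin θ ^ 2 * (cos α - cos (sin θ * R + α)))) :
    ∀ θ₁ θ₂ α₁ α₂ : ℝ,
      θ₁ ∈ Set.Ioo (-(π / 2)) (π / 2) → θ₂ ∈ Set.Ioo (-(π / 2)) (π / 2) →
      α₁ ∈ Set.Ico (-π) π → α₂ ∈ Set.Ico (-π) π →
      E θ₁ α₁ = E θ₂ α₂ → θ₁ = θ₂ ∧ α₁ = α₂ := by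
  intro θ₁ θ₂ α₁ α₂ h₁ h₂ hα₁ hα₂ heq
  have hπ := pi_pos
  have wfact : ∀ θ : ℝ, θ ∈ Set.Ioo (-(π/2)) (π/2) → (0 < cos θ ∧ sin θ^2 < 1) := by
    intro θ hθ
    have hc := Real.cos_pos_of_mem_Ioo hθ
    exact ⟨hc, by nlinarith [sin_sq_add_cos_sq θ]⟩
  have sinne : ∀ θ : ℝ, θ ∈ Set.Ioo (-(π/2)) (π/2) → θ ≠ 0 → sin θ ≠ 0 := by
    intro θ hθ h0 hs
    apply h0
    apply Real.injOn_sin (Set.mem_Icc.2 ⟨hθ.1.le, hθ.2.le⟩)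
      (Set.mem_Icc.2 ⟨by linarith, by linarith⟩)
    rw [hs, Real.sin_zero]
  have rho : ∀ θ α : ℝ, θ ∈ Set.Ioo (-(π/2)) (π/2) → θ ≠ 0 →
      (E θ α).1^2 + (E θ α).2.1^2 = (1 - sin θ^2) * sin (sin θ*R/2)^2 / sin θ^2 * 4 := by
    intro θ α hθ h0
    have hc2 : cos θ^2 = 1 - sin θ^2 := by linear_combination sin_sq_add_cos_sq θ
    rw [hE θ α h0]
    dsimp only
    have step1 : (2 * cos θ / sin θ * sin (sin θ * R / 2) * cos (sin θ * R / 2 + α))^2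
        + (2 * cos θ / sin θ * sin (sin θ * R / 2) * sin (sin θ * R / 2 + α))^2
        = (cos θ^2) * sin (sin θ*R/2)^2 / sin θ^2 * 4 := by
      linear_combination (4*cos θ^2/sin θ^2*sin (sin θ*R/2)^2) * sin_sq_add_cos_sq (sin θ*R/2+α)
    rw [step1, hc2]
  have rho0 : ∀ α : ℝ, (E 0 α).1^2 + (E 0 α).2.1^2 = R^2 := by
    intro α
    rw [hE0 α]
    dsimp only
    linear_combination R^2 * sin_sq_add_cos_sq α
  have rholt : ∀ θ : ℝ, θ ∈ Set.Ioo (-(π/2)) (π/2) → θ ≠ 0 →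
      (1 - sin θ^2) * sin (sin θ*R/2)^2 / sin θ^2 * 4 < R^2 := by
    intro θ hθ h0
    obtain ⟨hc, hw1⟩ := wfact θ hθ
    have hw := sinne θ hθ h0
    have hwpos : 0 < sin θ^2 := by positivity
    have hsq : sin (sin θ*R/2)^2 ≤ (sin θ*R/2)^2 := sin_sq_le_sq
    rw [show (1 - sin θ^2) * sin (sin θ*R/2)^2 / sin θ^2 * 4
      = 4*(1 - sin θ^2) * sin (sin θ*R/2)^2 / sin θ^2 by ring, div_lt_iff₀ hwpos]
    nlinarith [mul_le_mul_of_nonneg_left hsq (by linarith : (0:ℝ) ≤ 4*(1 - sin θ^2)),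
      mul_pos (mul_pos hwpos hwpos) (mul_pos hR0 hR0)]
  have ztv : ∀ θ α : ℝ, θ ∈ Set.Ioo (-(π/2)) (π/2) → θ ≠ 0 →
      (E θ α).2.2 - (E θ α).1 * (E θ α).2.1 / 2
        = sin θ*R + (1 - sin θ^2)*(sin θ*R - sin (sin θ*R))/(2*sin θ^2) := by
    intro θ α hθ h0
    have hw := sinne θ hθ h0
    rw [hE θ α h0]
    dsimp only
    linear_combination (ztil R (sin θ) (cos θ) α hw)
      + ((sin θ*R - sin (sin θ*R))/(2*sin θ^2)) * (sin_sq_add_cos_sq θ)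
  have zt0 : ∀ α : ℝ, (E 0 α).2.2 - (E 0 α).1 * (E 0 α).2.1 / 2 = 0 := by
    intro α
    rw [hE0 α]
    dsimp only
    ring
  have zpos : ∀ w : ℝ, 0 < w → w^2 < 1 →
      0 < w*R + (1 - w^2)*(w*R - sin (w*R))/(2*w^2) := by
    intro w hw hw1
    have h1 : sin (w*R) < w*R := sin_lt (by positivity)
    have h2 : 0 < (1 - w^2)*(w*R - sin (w*R))/(2*w^2) :=
      div_pos (mul_pos (by linarith) (by linarith)) (by positivity)
    have h3 : 0 < w*R := by positivity
    linarith
  have zneg : ∀ w : ℝ, w < 0 → w^2 < 1 →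
      w*R + (1 - w^2)*(w*R - sin (w*R))/(2*w^2) < 0 := by
    intro w hw hw1
    have h0 : w*R < 0 := mul_neg_of_neg_of_pos hw hR0
    have h1 : w*R < sin (w*R) := lt_sin h0
    have h2 : (1 - w^2)*(w*R - sin (w*R))/(2*w^2) < 0 :=
      div_neg_of_neg_of_pos (mul_neg_of_pos_of_neg (by linarith) (by linarith))
        (by nlinarith : (0:ℝ) < 2*w^2)
    linarith
  by_cases e1 : θ₁ = 0 <;> by_cases e2 : θ₂ = 0
  · -- both zero
    refine ⟨e1.trans e2.symm, ?_⟩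
    rw [e1] at heq; rw [e2] at heq
    rw [hE0 α₁, hE0 α₂] at heq
    simp only [Prod.mk.injEq] at heq
    obtain ⟨hx, hy, -⟩ := heq
    exact angle_unique α₁ α₂ hα₁ hα₂ (mul_left_cancel₀ hR0.ne' hx) (mul_left_cancel₀ hR0.ne' hy)
  · -- θ₁ = 0, θ₂ ≠ 0 : contradiction via ρ
    exfalso
    have hsum : (E θ₁ α₁).1^2 + (E θ₁ α₁).2.1^2 = (E θ₂ α₂).1^2 + (E θ₂ α₂).2.1^2 := by
      rw [heq]
    rw [e1] at hsum
    rw [rho0 α₁, rho θ₂ α₂ h₂ e2] at hsum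
    have := rholt θ₂ h₂ e2
    linarith
  · -- θ₂ = 0, θ₁ ≠ 0
    exfalso
    have hsum : (E θ₁ α₁).1^2 + (E θ₁ α₁).2.1^2 = (E θ₂ α₂).1^2 + (E θ₂ α₂).2.1^2 := by
      rw [heq]
    rw [e2] at hsum
    rw [rho0 α₂, rho θ₁ α₁ h₁ e1] at hsum
    have := rholt θ₁ h₁ e1
    linarith
  · -- both nonzero
    have hw₁ := sinne θ₁ h₁ e1
    have hw₂ := sinne θ₂ h₂ e2
    obtain ⟨hc₁, hq₁⟩ := wfact θ₁ h₁
    obtain ⟨hc₂, hq₂⟩ := wfact θ₂ h₂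
    have hsum : (1 - sin θ₁^2) * sin (sin θ₁*R/2)^2 / sin θ₁^2 * 4
        = (1 - sin θ₂^2) * sin (sin θ₂*R/2)^2 / sin θ₂^2 * 4 := by
      rw [← rho θ₁ α₁ h₁ e1, ← rho θ₂ α₂ h₂ e2, heq]
    have hzz : sin θ₁*R + (1 - sin θ₁^2)*(sin θ₁*R - sin (sin θ₁*R))/(2*sin θ₁^2)
        = sin θ₂*R + (1 - sin θ₂^2)*(sin θ₂*R - sin (sin θ₂*R))/(2*sin θ₂^2) := by
      rw [← ztv θ₁ α₁ h₁ e1, ← ztv θ₂ α₂ h₂ e2, heq]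
    have me : ∀ w : ℝ, sin ((-w)*R/2)^2 = sin (w*R/2)^2 := by
      intro w
      rw [show (-w)*R/2 = -(w*R/2) by ring, sin_neg]
      ring
    have hw : sin θ₁ = sin θ₂ := by
      rcases lt_trichotomy (sin θ₁) 0 with s1 | s1 | s1
      · rcases lt_trichotomy (sin θ₂) 0 with s2 | s2 | s2
        · -- both negative
          rcases lt_trichotomy (sin θ₁) (sin θ₂) with b | b | b
          · exfalso
            have hst := rho_strict R (-(sin θ₂)) (-(sin θ₁)) hR0 hR (by linarith)
              (by linarith) (by nlinarith)
            simp only [neg_sq] at hst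
            rw [me (sin θ₂), me (sin θ₁)] at hst
            linarith [hsum]
          · exact b
          · exfalso
            have hst := rho_strict R (-(sin θ₁)) (-(sin θ₂)) hR0 hR (by linarith)
              (by linarith) (by nlinarith)
            simp only [neg_sq] at hst
            rw [me (sin θ₂), me (sin θ₁)] at hst
            linarith [hsum]
        · exact absurd hw₂ (by rw [s2]; simp)
        · exfalso
          have z1 := zneg (sin θ₁) s1 hq₁
          have z2 := zpos (sin θ₂) s2 hq₂
          linarith
      · exact absurd hw₁ (by rw [s1]; simp)
      · rcases lt_trichotomy (sin θ₂) 0 with s2 | s2 | s2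
        · exfalso
          have z1 := zpos (sin θ₁) s1 hq₁
          have z2 := zneg (sin θ₂) s2 hq₂
          linarith
        · exact absurd hw₂ (by rw [s2]; simp)
        · rcases lt_trichotomy (sin θ₁) (sin θ₂) with b | b | b
          · exfalso
            have hst := rho_strict R (sin θ₁) (sin θ₂) hR0 hR s1 b (by nlinarith)
            linarith [hsum]
          · exact b
          · exfalso
            have hst := rho_strict R (sin θ₂) (sin θ₁) hR0 hR s2 b (by nlinarith)
            linarith [hsum]
    have hθ : θ₁ = θ₂ :=
      Real.injOn_sin (Set.mem_Icc.2 ⟨h₁.1.le, h₁.2.le⟩) (Set.mem_Icc.2 ⟨h₂.1.le, h₂.2.le⟩) hw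
    subst hθ
    refine ⟨rfl, ?_⟩
    rw [hE θ₁ α₁ e1, hE θ₁ α₂ e2] at heq
    simp only [Prod.mk.injEq] at heq
    obtain ⟨hx, hy, -⟩ := heq
    have hs5 : sin (sin θ₁*R/2) ≠ 0 := by
      have hb1 : -1 < sin θ₁ := by nlinarith
      have hb2 : sin θ₁ < 1 := by nlinarith
      rw [ne_eq, sin_eq_zero_iff_of_lt_of_lt
        (by nlinarith [mul_lt_mul_of_pos_right hb1 hR0])
        (by nlinarith [mul_lt_mul_of_pos_right hb2 hR0])]
      intro hh
      apply hw₁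
      have : sin θ₁ * R = 0 := by linarith
      rcases mul_eq_zero.1 this with h | h
      · exact h
      · exact absurd h hR0.ne'
    have hk : 2 * cos θ₁ / sin θ₁ * sin (sin θ₁ * R / 2) ≠ 0 :=
      mul_ne_zero (div_ne_zero (by positivity) hw₁) hs5
    have hcc := mul_left_cancel₀ hk hx
    have hss := mul_left_cancel₀ hk hy
    have hca : cos α₁ = cos α₂ := by
      have q1 : ((sin θ₁*R/2 + α₁) - sin θ₁*R/2) = α₁ := by ring
      have q2 : ((sin θ₁*R/2 + α₂) - sin θ₁*R/2) = α₂ := by ring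
      calc cos α₁ = cos ((sin θ₁*R/2 + α₁) - sin θ₁*R/2) := by rw [q1]
        _ = cos (sin θ₁*R/2 + α₁) * cos (sin θ₁*R/2) + sin (sin θ₁*R/2 + α₁) * sin (sin θ₁*R/2) :=
            cos_sub _ _
        _ = cos (sin θ₁*R/2 + α₂) * cos (sin θ₁*R/2) + sin (sin θ₁*R/2 + α₂) * sin (sin θ₁*R/2) := by
            rw [hcc, hss]
        _ = cos ((sin θ₁*R/2 + α₂) - sin θ₁*R/2) := (cos_sub _ _).symm
        _ = cos α₂ := by rw [q2]
    have hsa : sin α₁ = sin α₂ := by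
      have q1 : ((sin θ₁*R/2 + α₁) - sin θ₁*R/2) = α₁ := by ring
      have q2 : ((sin θ₁*R/2 + α₂) - sin θ₁*R/2) = α₂ := by ring
      calc sin α₁ = sin ((sin θ₁*R/2 + α₁) - sin θ₁*R/2) := by rw [q1]
        _ = sin (sin θ₁*R/2 + α₁) * cos (sin θ₁*R/2) - cos (sin θ₁*R/2 + α₁) * sin (sin θ₁*R/2) :=
            sin_sub _ _
        _ = sin (sin θ₁*R/2 + α₂) * cos (sin θ₁*R/2) - cos (sin θ₁*R/2 + α₂) * sin (sin θ₁*R/2) := by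
            rw [hcc, hss]
        _ = sin ((sin θ₁*R/2 + α₂) - sin θ₁*R/2) := (sin_sub _ _).symm
        _ = sin α₂ := by rw [q2]
    exact angle_unique α₁ α₂ hα₁ hα₂ hca hsa
end
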